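/- Let G be the complete graph on n ≥ 4 vertices with one edge removed (so G has n-2 vertices of degree n-1 and 2 vertices of degree n-2), and let m be its number of edges. Then μ(G) - 2m/n > 1/(2m + 2n). -/
import Mathlib

/-- The spectral radius (largest adjacency eigenvalue) of a graph. -/
noncomputable def graphMu {n : ℕ} (G : SimpleGraph (Fin n)) [DecidableRel G.Adj] : ℝ :=
  sSup {x : ℝ | Module.End.HasEigenvalue (Matrix.toLin' (G.adjMatrix ℝ)) x}

theorem complete_minus_edge_gap {n : ℕ} (hn : 4 ≤ n) (G : SimpleGraph (Fin n))
    [DecidableRel G.Adj] (a b : Fin n) (hab : a ≠ b)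
    (hG : ∀ u v : Fin n, G.Adj u v ↔ (u ≠ v ∧ s(u, v) ≠ s(a, b))) :
    graphMu G - 2 * (G.edgeFinset.card : ℝ) / n >
      1 / (2 * (G.edgeFinset.card : ℝ) + 2 * n) := by
  classical
  have hN : (4:ℝ) ≤ (n:ℝ) := by exact_mod_cast hn
  set N : ℝ := (n : ℝ) with hNdef
  -- adjacency characterization
  have hAdj : ∀ i j, G.Adj i j ↔ (j ≠ i ∧ ¬(i = a ∧ j = b) ∧ ¬(i = b ∧ j = a)) := by
    intro i j
    rw [hG]
    constructor
    · rintro ⟨h1, h2⟩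
      refine ⟨Ne.symm h1, ?_, ?_⟩ <;> rintro ⟨rfl, rfl⟩ <;> simp [Sym2.eq_swap] at h2
    · rintro ⟨h1, h2, h3⟩
      refine ⟨Ne.symm h1, fun h => ?_⟩
      rw [Sym2.eq_iff] at h
      tauto
  -- edge count
  have hcNat : 2 * G.edgeFinset.card + 2 = n * (n - 1) := by
    have hE : G.edgeFinset = ((⊤ : SimpleGraph (Fin n)).edgeFinset).erase s(a, b) := by
      ext e
      refine Sym2.ind (fun u v => ?_) e
      simp only [SimpleGraph.mem_edgeFinset, SimpleGraph.mem_edgeSet, Finset.mem_erase,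
        SimpleGraph.top_adj, hG, Sym2.eq_iff, ne_eq]
      tauto
    have hmemtop : s(a, b) ∈ (⊤ : SimpleGraph (Fin n)).edgeFinset := by
      simp [SimpleGraph.mem_edgeFinset, hab]
    have htop : ((⊤ : SimpleGraph (Fin n)).edgeFinset).card = n.choose 2 := by
      rw [SimpleGraph.card_edgeFinset_top_eq_card_choose_two, Fintype.card_fin]
    have hchoose : 2 * n.choose 2 = n * (n - 1) := by
      have hdvd : 2 ∣ n * (n - 1) := by
        rcases Nat.even_mul_succ_self (n - 1) with ⟨k, hk⟩
        rw [(by omega : n - 1 + 1 = n)] at hk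
        exact ⟨k, by rw [mul_comm]; omega⟩
      rw [Nat.choose_two_right, Nat.mul_div_cancel' hdvd]
    have h1 : 1 ≤ n.choose 2 := Nat.choose_pos (by omega)
    rw [hE, Finset.card_erase_of_mem hmemtop, htop]
    omega
  have hcard : (G.edgeFinset.card : ℝ) = (N^2 - N - 2)/2 := by
    have := congrArg (Nat.cast : ℕ → ℝ) hcNat
    push_cast [Nat.cast_sub (by omega : 1 ≤ n)] at this
    rw [← hNdef] at this
    linarith [this]
  -- the eigenvalue
  have hD0 : (0:ℝ) ≤ N^2 + 2*N - 7 := by nlinarith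
  set s : ℝ := Real.sqrt (N^2 + 2*N - 7) with hsdef
  have hs2 : s^2 = N^2 + 2*N - 7 := Real.sq_sqrt hD0
  set μ : ℝ := ((N - 3) + s)/2 with hμdef
  have hquad : μ^2 = (N-3)*μ + 2*(N-2) := by
    rw [hμdef]
    linear_combination hs2/4
  -- eigenvector
  set v : Fin n → ℝ := fun j => if j = a ∨ j = b then N - 2 else μ with hvdef
  have hsum_off : ∑ j ∈ Finset.univ \ {a, b}, v j = ((n:ℝ) - 2) * μ := by
    have hconst : ∀ j ∈ Finset.univ \ ({a, b} : Finset (Fin n)), v j = μ := by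
      intro j hj
      simp only [Finset.mem_sdiff, Finset.mem_insert, Finset.mem_singleton] at hj
      simp [hvdef, hj.2]
    rw [Finset.sum_congr rfl hconst, Finset.sum_const, Finset.card_sdiff_of_subset (by simp),
      Finset.card_pair hab, Finset.card_univ, Fintype.card_fin, nsmul_eq_mul,
      Nat.cast_sub (by omega : 2 ≤ n)]
    norm_num
  have hnbrA : ∀ i, (i = a ∨ i = b) → G.neighborFinset i = Finset.univ \ {a, b} := by
    intro i hi
    ext j
    simp only [SimpleGraph.mem_neighborFinset, hAdj, Finset.mem_sdiff, Finset.mem_univ,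
      Finset.mem_insert, Finset.mem_singleton, true_and]
    rcases hi with rfl | rfl
    · constructor
      · rintro ⟨h1, h2, h3⟩ hj
        rcases hj with rfl | rfl
        · exact h1 rfl
        · exact h2 ⟨rfl, rfl⟩
      · intro h
        exact ⟨fun hja => h (Or.inl hja), fun hc => h (Or.inr hc.2), fun hc => hab hc.1⟩
    · constructor
      · rintro ⟨h1, h2, h3⟩ hj
        rcases hj with rfl | rfl
        · exact h3 ⟨rfl, rfl⟩
        · exact h1 rfl
      · intro h
        exact ⟨fun hjb => h (Or.inr hjb), fun hc => hab hc.1.symm, fun hc => h (Or.inl hc.2)⟩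
  have hnbrO : ∀ i, ¬(i = a ∨ i = b) → G.neighborFinset i = Finset.univ \ {i} := by
    intro i hi
    push_neg at hi
    ext j
    simp only [SimpleGraph.mem_neighborFinset, hAdj, Finset.mem_sdiff, Finset.mem_univ,
      Finset.mem_singleton, true_and]
    constructor
    · rintro ⟨h1, _, _⟩; exact h1
    · intro h1
      exact ⟨h1, fun hc => hi.1 hc.1, fun hc => hi.2 hc.1⟩
  have heig : Module.End.HasEigenvalue (Matrix.toLin' (G.adjMatrix ℝ)) μ := by
    apply Module.End.hasEigenvalue_of_hasEigenvector (x := v)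
    constructor
    · rw [Module.End.mem_eigenspace_iff, Matrix.toLin'_apply]
      funext i
      rw [SimpleGraph.adjMatrix_mulVec_apply]
      by_cases hi : i = a ∨ i = b
      · rw [hnbrA i hi, hsum_off]
        have hvi : v i = N - 2 := by simp [hvdef, hi]
        rw [Pi.smul_apply, hvi, smul_eq_mul]
        ring
      · rw [hnbrO i hi]
        have hvi : v i = μ := by simp [hvdef, hi]
        have hsplit : ∑ j ∈ Finset.univ \ {i}, v j
            = (∑ j ∈ Finset.univ, v j) - v i := by
          have h0 := Finset.sum_sdiff (f := v) (by simp : ({i} : Finset (Fin n)) ⊆ Finset.univ)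
          rw [Finset.sum_singleton] at h0
          linarith
        have htot : ∑ j ∈ Finset.univ, v j = 2*(N-2) + ((n:ℝ) - 2) * μ := by
          rw [← Finset.sum_sdiff (s₁ := ({a, b} : Finset (Fin n))) (by simp), hsum_off,
            Finset.sum_pair hab]
          have hva : v a = N - 2 := by simp [hvdef]
          have hvb : v b = N - 2 := by simp [hvdef]
          rw [hva, hvb]; ring
        rw [hsplit, htot, hvi, Pi.smul_apply, hvi, smul_eq_mul, ← sq, hquad]
        rw [hNdef]; ring
    · intro hv0
      have : v a = 0 := congrFun hv0 a
      simp only [hvdef, if_pos (Or.inl rfl)] at this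
      linarith
  -- bounded above
  have hbdd : BddAbove {x : ℝ | Module.End.HasEigenvalue (Matrix.toLin' (G.adjMatrix ℝ)) x} :=
    (Module.End.finite_hasEigenvalue (Matrix.toLin' (G.adjMatrix ℝ))).bddAbove
  have hle : μ ≤ graphMu G := le_csSup hbdd heig
  -- final arithmetic
  have hNpos : (0:ℝ) < N := by linarith
  have hQpos : (0:ℝ) < N^2 + N - 2 := by nlinarith
  have hkey : 2/(N^2+N-2) + (N^2+N-4)/N < s := by
    rw [hsdef]
    have hx0 : (0:ℝ) ≤ 2/(N^2+N-2) + (N^2+N-4)/N :=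
      add_nonneg (div_nonneg (by norm_num) hQpos.le)
        (div_nonneg (by nlinarith) hNpos.le)
    rw [Real.lt_sqrt hx0]
    rw [div_add_div _ _ (ne_of_gt hQpos) (ne_of_gt hNpos), div_pow,
      div_lt_iff₀ (by positivity)]
    nlinarith [sq_nonneg (N-4), sq_nonneg ((N-4)^2), mul_nonneg (mul_nonneg (sub_nonneg.2 hN) (sub_nonneg.2 hN)) (sub_nonneg.2 hN), mul_nonneg (mul_nonneg (mul_nonneg (sub_nonneg.2 hN) (sub_nonneg.2 hN)) (sub_nonneg.2 hN)) (sub_nonneg.2 hN), mul_nonneg (mul_nonneg (mul_nonneg (mul_nonneg (sub_nonneg.2 hN) (sub_nonneg.2 hN)) (sub_nonneg.2 hN)) (sub_nonneg.2 hN)) (sub_nonneg.2 hN)]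
  have hform : 2/(N^2+N-2) + (N^2+N-4)/N
      = 2/(N^2+N-2) + 2*((N^2-N-2)/2)*2/N - (N-3) := by
    field_simp
    ring
  rw [hcard]
  have h2c : 2 * ((N^2 - N - 2)/2) + 2 * N = N^2 + N - 2 := by ring
  rw [hNdef] at h2c ⊢
  rw [h2c]
  have hgoal : 1/(N^2+N-2) < μ - 2 * ((N^2-N-2)/2) / N := by
    rw [hμdef]
    rw [hform] at hkey
    have e1 : 2/(N^2+N-2) = 2 * (1/(N^2+N-2)) := by ring
    have e2 : 2*((N^2-N-2)/2)*2/N = 2 * (2*((N^2-N-2)/2)/N) := by ring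
    rw [e1, e2] at hkey
    linarith
  rw [← hNdef]
  linarith
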